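/- Let n be a positive integer and let 𝓕 be a family of subsets of [n] = {1,2,...,n} that contains no sunflower with 3 petals. Then |𝓕| ≤ 3·⌈n/3⌉·C(n, ⌊n/3⌋) + 2·∑_{i=0}^{⌈n/3⌉} C(n, i), where C(n, i) denotes the binomial coefficient 'n choose i'. -/

import Mathlib

/-- `{F₁, F₂, F₃}` is a sunflower with 3 petals: the three sets are pairwise
distinct and any pairwise intersection equals the common intersection. -/
def IsSunflower3 {α : Type*} [DecidableEq α] (F₁ F₂ F₃ : Finset α) : Prop :=
  F₁ ≠ F₂ ∧ F₁ ≠ F₃ ∧ F₂ ≠ F₃ ∧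
  F₁ ∩ F₂ = F₁ ∩ F₂ ∩ F₃ ∧ F₁ ∩ F₃ = F₁ ∩ F₂ ∩ F₃ ∧ F₂ ∩ F₃ = F₁ ∩ F₂ ∩ F₃

/-- A family is sunflower-free if no three of its members form a sunflower
with 3 petals. -/
def SunflowerFree {α : Type*} [DecidableEq α] (𝓕 : Finset (Finset α)) : Prop :=
  ∀ F₁ ∈ 𝓕, ∀ F₂ ∈ 𝓕, ∀ F₃ ∈ 𝓕, ¬ IsSunflower3 F₁ F₂ F₃


namespace SFP
open Finset Module

-- every subspace of ℚ^α contains a vector nonzero wherever possible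
lemma exists_vec_support {α : Type*} [Fintype α] [DecidableEq α]
    (V : Submodule ℚ (α → ℚ)) (s : Finset α)
    (h : ∀ a ∈ s, ∃ ψ ∈ V, ψ a ≠ 0) :
    ∃ φ ∈ V, ∀ a ∈ s, φ a ≠ 0 := by
  classical
  induction s using Finset.induction with
  | empty => exact ⟨0, V.zero_mem, by simp⟩
  | @insert a s ha ih =>
    obtain ⟨φ, hφV, hφ⟩ := ih (fun b hb => h b (mem_insert_of_mem hb))
    obtain ⟨ψ, hψV, hψa⟩ := h a (mem_insert_self a s)
    obtain ⟨c, hc⟩ := Infinite.exists_notMem_finset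
      ((insert a s).image (fun b => -φ b / ψ b))
    refine ⟨φ + c • ψ, V.add_mem hφV (V.smul_mem c hψV), ?_⟩
    intro b hb
    by_cases hψb : ψ b = 0
    · have hba : b ≠ a := fun e => hψa (e ▸ hψb)
      have : φ b ≠ 0 := hφ b ((mem_insert.1 hb).resolve_left hba)
      simpa [hψb] using this
    · intro hzero
      apply hc
      rw [mem_image]
      refine ⟨b, hb, ?_⟩
      have : c = -φ b / ψ b := by
        field_simp
        simp only [Pi.add_apply, Pi.smul_apply, smul_eq_mul] at hzero
        linarith
      exact this.symm


lemma exists_good_vec {α : Type*} [Fintype α] [DecidableEq α] (V : Submodule ℚ (α → ℚ)) :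
    ∃ φ ∈ V, Module.finrank ℚ V ≤ (Finset.univ.filter fun a => φ a ≠ 0).card := by
  classical
  set S : Finset α := Finset.univ.filter (fun a => ¬ ∀ ψ ∈ V, ψ a = 0) with hS
  obtain ⟨φ, hφV, hφ⟩ := exists_vec_support V S (by
    intro a haS
    simp only [hS, mem_filter] at haS
    push_neg at haS
    obtain ⟨ψ, h1, h2⟩ := haS.2
    exact ⟨ψ, h1, h2⟩)
  refine ⟨φ, hφV, ?_⟩
  have hrank : Module.finrank ℚ V ≤ S.card := by
    have hinj : Function.Injective
        ((LinearMap.funLeft ℚ ℚ (fun i : ↥S => (i : α))).comp V.subtype) := by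
      intro x y hxy
      ext a
      by_cases haS : a ∈ S
      · have := congrFun hxy ⟨a, haS⟩
        simpa [LinearMap.funLeft] using this
      · simp only [hS, mem_filter, mem_univ, true_and, not_not] at haS
        rw [haS (x : α → ℚ) x.2, haS (y : α → ℚ) y.2]
    have := LinearMap.finrank_le_finrank_of_injective hinj
    simpa [Module.finrank_pi] using this
  refine hrank.trans (Finset.card_le_card ?_)
  intro a haS
  simp only [mem_filter, mem_univ, true_and] at haS ⊢
  exact hφ a haS


lemma mat_rank_add_le {α : Type*} [Fintype α] (A B : Matrix α α ℚ) :
    (A + B).rank ≤ A.rank + B.rank := by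
  rw [Matrix.rank, Matrix.rank, Matrix.rank, Matrix.mulVecLin_add]
  refine le_trans (Submodule.finrank_mono ?_) (Submodule.finrank_add_le_finrank_add_finrank _ _)
  rintro x ⟨y, rfl⟩
  exact Submodule.mem_sup.2 ⟨A.mulVecLin y, ⟨y, rfl⟩, B.mulVecLin y, ⟨y, rfl⟩, by simp⟩

lemma mat_rank_vecMulVec_le {α : Type*} [Fintype α] (u v : α → ℚ) :
    (Matrix.vecMulVec u v).rank ≤ 1 := by
  rw [Matrix.vecMulVec_eq (Fin 1)]
  refine (Matrix.rank_mul_le_right _ _).trans ?_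
  simpa using Matrix.rank_le_card_height (Matrix.replicateRow (Fin 1) v)

lemma mat_rank_sum_le {α ι : Type*} [Fintype α] [DecidableEq ι] (s : Finset ι)
    (f : ι → α → ℚ) (g : ι → α → ℚ) :
    (∑ i ∈ s, Matrix.vecMulVec (f i) (g i)).rank ≤ s.card := by
  induction s using Finset.induction with
  | empty => simp
  | @insert a s ha ih =>
    rw [Finset.sum_insert ha, Finset.card_insert_of_notMem ha]
    refine (mat_rank_add_le _ _).trans ?_
    have := mat_rank_vecMulVec_le (f a) (g a)
    omega

theorem tao {α ι : Type*} [Fintype α] [DecidableEq α] [DecidableEq ι]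
    (T : α → α → α → ℚ)
    (hdiag : ∀ a, T a a a ≠ 0)
    (hoff : ∀ a b c : α, ¬ (a = b ∧ b = c) → T a b c = 0)
    (s₁ s₂ s₃ : Finset ι)
    (u₁ u₂ u₃ : ι → α → ℚ) (v₁ v₂ v₃ : ι → α → α → ℚ)
    (hT : ∀ a b c, T a b c =
      ∑ i ∈ s₁, u₁ i a * v₁ i b c
      + ∑ i ∈ s₂, u₂ i b * v₂ i a c
      + ∑ i ∈ s₃, u₃ i c * v₃ i a b) :
    Fintype.card α ≤ s₁.card + s₂.card + s₃.card := by
  classical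
  set U : Matrix ↥s₁ α ℚ := fun i a => u₁ (i : ι) a with hU
  set L := U.mulVecLin with hL
  have hrn := LinearMap.finrank_range_add_finrank_ker L
  have hrange : Module.finrank ℚ (LinearMap.range L) ≤ s₁.card := by
    refine le_trans (Submodule.finrank_le _) ?_
    simp [Module.finrank_pi]
  have hdom : Module.finrank ℚ (α → ℚ) = Fintype.card α := by
    simp [Module.finrank_pi]
  obtain ⟨φ, hφV, hφcard⟩ := exists_good_vec (LinearMap.ker L)
  have hφker : ∀ i ∈ s₁, ∑ a, u₁ i a * φ a = 0 := by
    intro i hi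
    have h0 : L φ = 0 := hφV
    have := congrFun h0 ⟨i, hi⟩
    rw [Matrix.mulVecLin_apply] at this
    simpa [hL, hU, Matrix.mulVecLin_apply, Matrix.mulVec, dotProduct] using this
  set M : Matrix α α ℚ := fun b c => ∑ a, φ a * T a b c with hM
  -- M is diagonal
  have hMdiag : M = Matrix.diagonal (fun b => φ b * T b b b) := by
    ext b c
    by_cases hbc : b = c
    · subst hbc
      rw [Matrix.diagonal_apply_eq]
      refine Finset.sum_eq_single b (fun a _ hab => ?_) (by simp)
      rw [hoff a b b (fun h => hab h.1), mul_zero]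
    · rw [Matrix.diagonal_apply_ne _ hbc]
      refine Finset.sum_eq_zero (fun a _ => ?_)
      rw [hoff a b c (fun h => hbc h.2), mul_zero]
  have hMrank : M.rank = (Finset.univ.filter fun a => φ a ≠ 0).card := by
    rw [hMdiag, Matrix.rank_diagonal, Fintype.card_subtype]
    congr 1
    apply Finset.filter_congr
    intro b _
    simp [mul_ne_zero_iff, hdiag b]
  -- M as sum of rank ones
  have hMsum : M = (∑ i ∈ s₂, Matrix.vecMulVec (u₂ i) (fun c => ∑ a, φ a * v₂ i a c))
      + (∑ i ∈ s₃, Matrix.vecMulVec (fun b => ∑ a, φ a * v₃ i a b) (u₃ i)) := by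
    ext b c
    have : M b c = ∑ a, φ a * T a b c := rfl
    rw [this]
    have expand : ∀ a, φ a * T a b c =
        (∑ i ∈ s₁, (u₁ i a * φ a) * v₁ i b c)
        + ((∑ i ∈ s₂, u₂ i b * (φ a * v₂ i a c))
        + (∑ i ∈ s₃, (φ a * v₃ i a b) * u₃ i c)) := by
      intro a
      rw [hT a b c]
      simp only [mul_add, Finset.mul_sum]
      rw [add_assoc]
      congr 1
      · exact Finset.sum_congr rfl (fun i _ => by ring)
      congr 1
      · exact Finset.sum_congr rfl (fun i _ => by ring)
      · exact Finset.sum_congr rfl (fun i _ => by ring)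
    rw [Finset.sum_congr rfl (fun a _ => expand a)]
    rw [Finset.sum_add_distrib, Finset.sum_add_distrib]
    rw [Finset.sum_comm (s := univ) (t := s₁), Finset.sum_comm (s := univ) (t := s₂),
        Finset.sum_comm (s := univ) (t := s₃)]
    have h1 : ∑ i ∈ s₁, ∑ a, (u₁ i a * φ a) * v₁ i b c = 0 := by
      refine Finset.sum_eq_zero (fun i hi => ?_)
      rw [← Finset.sum_mul, hφker i hi, zero_mul]
    rw [h1, zero_add]
    simp only [Matrix.add_apply, Matrix.sum_apply, Matrix.vecMulVec_apply]
    congr 1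
    · refine Finset.sum_congr rfl (fun i _ => ?_)
      rw [Finset.mul_sum]
    · refine Finset.sum_congr rfl (fun i _ => ?_)
      rw [Finset.sum_mul]
  have hrank_le : M.rank ≤ s₂.card + s₃.card := by
    rw [hMsum]
    exact (mat_rank_add_le _ _).trans (by
      have := mat_rank_sum_le s₂ u₂ (fun i c => ∑ a, φ a * v₂ i a c)
      have := mat_rank_sum_le s₃ (fun i b => ∑ a, φ a * v₃ i a b) u₃
      omega)
  rw [hdom] at hrn
  rw [hMrank] at hrank_le
  omega


lemma count_between (A F : Finset (Fin n)) (t : ℕ) (hAF : A ⊆ F) (hA : A.card ≤ t) :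
    ((univ.powersetCard t).filter (fun D => A ⊆ D ∧ D ⊆ F)).card
      = Nat.choose (F.card - A.card) (t - A.card) := by
  classical
  rw [← Finset.card_sdiff_of_subset hAF, ← Finset.card_powersetCard (t - A.card) (F \ A)]
  apply Finset.card_nbij' (i := fun D => D \ A) (j := fun D' => A ∪ D')
  · intro D hD
    simp only [Finset.mem_coe, mem_filter, Finset.mem_powersetCard] at hD
    obtain ⟨⟨_, hDt⟩, hAD, hDF⟩ := hD
    rw [Finset.mem_coe, Finset.mem_powersetCard]
    exact ⟨Finset.sdiff_subset_sdiff hDF (le_refl A), by rw [Finset.card_sdiff_of_subset hAD, hDt]⟩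
  · intro D' hD'
    rw [Finset.mem_coe, Finset.mem_powersetCard] at hD'
    obtain ⟨hsub, hcard⟩ := hD'
    have hDF : D' ⊆ F := hsub.trans (Finset.sdiff_subset)
    have hdisj : Disjoint A D' := (Finset.subset_sdiff.mp hsub).2.symm
    simp only [Finset.mem_coe, mem_filter, Finset.mem_powersetCard]
    refine ⟨⟨Finset.subset_univ _, ?_⟩, Finset.subset_union_left, Finset.union_subset hAF hDF⟩
    rw [Finset.card_union_of_disjoint hdisj, hcard]
    omega
  · intro D hD
    simp only [Finset.mem_coe, mem_filter, Finset.mem_powersetCard] at hD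
    exact Finset.union_sdiff_of_subset hD.2.1
  · intro D' hD'
    rw [Finset.mem_coe, Finset.mem_powersetCard] at hD'
    have hdisj : Disjoint A D' := (Finset.subset_sdiff.mp hD'.1).2.symm
    exact Finset.union_sdiff_cancel_left hdisj


lemma chi_eq {t k : ℕ} (htk : t ≤ k) (A F : Finset (Fin n)) (hF : F.card = k) (hA : A.card ≤ t) :
    (if A ⊆ F then (1:ℚ) else 0) =
      ∑ D ∈ univ.powersetCard t,
        ((Nat.choose (k - A.card) (t - A.card) : ℚ))⁻¹
          * (if A ⊆ D then 1 else 0) * (if D ⊆ F then 1 else 0) := by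
  classical
  have hmul : ∀ D : Finset (Fin n),
      ((Nat.choose (k - A.card) (t - A.card) : ℚ))⁻¹
        * (if A ⊆ D then (1:ℚ) else 0) * (if D ⊆ F then 1 else 0)
      = ((Nat.choose (k - A.card) (t - A.card) : ℚ))⁻¹
        * (if A ⊆ D ∧ D ⊆ F then 1 else 0) := by
    intro D
    by_cases h1 : A ⊆ D <;> by_cases h2 : D ⊆ F <;> simp [h1, h2]
  rw [Finset.sum_congr rfl (fun D _ => hmul D), ← Finset.mul_sum]
  rw [Finset.sum_boole]
  by_cases hAF : A ⊆ F
  · rw [Finset.filter_congr (fun D _ => Iff.rfl), count_between A F t hAF hA]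
    rw [hF, if_pos hAF]
    have hpos : 0 < Nat.choose (k - A.card) (t - A.card) :=
      Nat.choose_pos (by omega)
    field_simp
  · rw [if_neg hAF]
    have : (univ.powersetCard t).filter (fun D => A ⊆ D ∧ D ⊆ F) = ∅ := by
      rw [Finset.filter_eq_empty_iff]
      rintro D _ ⟨h1, h2⟩
      exact hAF (h1.trans h2)
    rw [Finset.filter_congr (fun D _ => Iff.rfl), this]
    simp


def fib (c : Fin n → Fin 4) (j : Fin 4) : Finset (Fin n) := univ.filter (fun i => c i = j)

lemma prod_ind (s F : Finset (Fin n)) :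
    (∏ i ∈ s, if i ∈ F then (1:ℚ) else 0) = if s ⊆ F then 1 else 0 := by
  rw [Finset.prod_boole]
  by_cases h : s ⊆ F
  · rw [if_pos h, if_pos (fun i hi => h hi)]
  · rw [if_neg h, if_neg (fun hall => h (fun i hi => hall i hi))]


def uu (D F : Finset (Fin n)) : ℚ := if D ⊆ F then 1 else 0

def rr (k t : ℕ) (A D : Finset (Fin n)) : ℚ :=
  (Nat.choose (k - A.card) (t - A.card) : ℚ)⁻¹ * (if A ⊆ D then 1 else 0)


lemma chi_eq' {t k : ℕ} (htk : t ≤ k) (A F : Finset (Fin n)) (hF : F.card = k) (hA : A.card ≤ t) :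
    (if A ⊆ F then (1:ℚ) else 0) = ∑ D ∈ univ.powersetCard t, rr k t A D * uu D F :=
  chi_eq htk A F hF hA


lemma exp_lemma (F₁ F₂ F₃ : Finset (Fin n)) :
    ∏ i : Fin n, ((if i ∈ F₁ then (1:ℚ) else 0) + (if i ∈ F₂ then 1 else 0)
        + (if i ∈ F₃ then 1 else 0) - 2)
    = ∑ c : Fin n → Fin 4,
        (if fib c 0 ⊆ F₁ then (1:ℚ) else 0) * (if fib c 1 ⊆ F₂ then 1 else 0)
          * (if fib c 2 ⊆ F₃ then 1 else 0) * (-2)^((fib c 3).card) := by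
  classical
  set e : Fin n → Fin 4 → ℚ := fun i =>
    ![if i ∈ F₁ then 1 else 0, if i ∈ F₂ then 1 else 0, if i ∈ F₃ then 1 else 0, -2] with he
  have hstep : ∀ i : Fin n, ((if i ∈ F₁ then (1:ℚ) else 0) + (if i ∈ F₂ then 1 else 0)
      + (if i ∈ F₃ then 1 else 0) - 2) = ∑ j : Fin 4, e i j := by
    intro i
    rw [Fin.sum_univ_four]
    simp only [he, Matrix.cons_val_zero, Matrix.cons_val_one, Matrix.head_cons,
      Matrix.cons_val_two, Matrix.tail_cons, Matrix.cons_val_three]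
    ring
  rw [Finset.prod_congr rfl (fun i _ => hstep i), Fintype.prod_sum]
  refine Finset.sum_congr rfl (fun c _ => ?_)
  have hpart : ∏ i : Fin n, e i (c i)
      = ∏ j : Fin 4, ∏ i ∈ univ.filter (fun i => c i = j), e i (c i) := by
    rw [Finset.prod_fiberwise_of_maps_to (fun x _ => Finset.mem_univ (c x))]
  have hfib : ∀ j : Fin 4, (∏ i ∈ univ.filter (fun i => c i = j), e i (c i))
      = ∏ i ∈ fib c j, e i j := by
    intro j
    refine Finset.prod_congr rfl (fun i hi => ?_)
    rw [(Finset.mem_filter.mp hi).2]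
  rw [hpart, Fin.prod_univ_four, hfib 0, hfib 1, hfib 2, hfib 3]
  have e0 : ∀ i : Fin n, e i 0 = if i ∈ F₁ then (1:ℚ) else 0 := fun i => rfl
  have e1 : ∀ i : Fin n, e i 1 = if i ∈ F₂ then (1:ℚ) else 0 := fun i => rfl
  have e2 : ∀ i : Fin n, e i 2 = if i ∈ F₃ then (1:ℚ) else 0 := fun i => rfl
  have e3 : ∀ i : Fin n, e i 3 = (-2:ℚ) := fun i => rfl
  simp only [e0, e1, e2, e3]
  rw [prod_ind, prod_ind, prod_ind, Finset.prod_const]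


lemma fib_card_sum (c : Fin n → Fin 4) :
    (fib c 0).card + (fib c 1).card + (fib c 2).card + (fib c 3).card = n := by
  classical
  have h := Finset.card_eq_sum_card_fiberwise (s := (univ : Finset (Fin n)))
    (t := (univ : Finset (Fin 4))) (f := c) (fun x _ => Finset.mem_univ (c x))
  rw [Fin.sum_univ_four] at h
  simp only [Finset.card_univ, Fintype.card_fin] at h
  simpa [fib] using h.symm


lemma slice_bound {k t : ℕ} (ht3 : n ≤ 3 * t + 2) (htk : t ≤ k)
    (𝒜 : Finset (Finset (Fin n))) (hcard : ∀ F ∈ 𝒜, F.card = k)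
    (hfree : ∀ F₁ ∈ 𝒜, ∀ F₂ ∈ 𝒜, ∀ F₃ ∈ 𝒜, F₁ ≠ F₂ → F₁ ≠ F₃ → F₂ ≠ F₃ →
      ∃ i, (i ∈ F₁ ∧ i ∈ F₂ ∧ i ∉ F₃) ∨ (i ∈ F₁ ∧ i ∉ F₂ ∧ i ∈ F₃)
        ∨ (i ∉ F₁ ∧ i ∈ F₂ ∧ i ∈ F₃)) :
    𝒜.card ≤ 3 * Nat.choose n t := by
  classical
  set T : ↥𝒜 → ↥𝒜 → ↥𝒜 → ℚ := fun x y z =>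
    ∏ i : Fin n, ((if i ∈ (x:Finset (Fin n)) then (1:ℚ) else 0)
      + (if i ∈ (y:Finset (Fin n)) then 1 else 0)
      + (if i ∈ (z:Finset (Fin n)) then 1 else 0) - 2) with hTdef
  -- diagonal nonzero
  have hdiag : ∀ x : ↥𝒜, T x x x ≠ 0 := by
    intro x
    rw [hTdef]
    rw [Finset.prod_ne_zero_iff]
    intro i _
    by_cases h : i ∈ (x:Finset (Fin n)) <;> simp [h] <;> norm_num
  -- off-diagonal zero
  have hzero_of : ∀ (x y z : ↥𝒜) (i : Fin n),
      ((if i ∈ (x:Finset (Fin n)) then (1:ℚ) else 0)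
        + (if i ∈ (y:Finset (Fin n)) then 1 else 0)
        + (if i ∈ (z:Finset (Fin n)) then 1 else 0) - 2) = 0 → T x y z = 0 := by
    intro x y z i hi
    rw [hTdef]
    exact Finset.prod_eq_zero (Finset.mem_univ i) hi
  have hnotsub : ∀ x y : ↥𝒜, (x:Finset (Fin n)) ≠ (y:Finset (Fin n)) →
      ∃ i, i ∈ (x:Finset (Fin n)) ∧ i ∉ (y:Finset (Fin n)) := by
    intro x y hxy
    have hcx := hcard _ x.2
    have hcy := hcard _ y.2
    have : ¬ (x:Finset (Fin n)) ⊆ (y:Finset (Fin n)) := by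
      intro hsub
      exact hxy (Finset.eq_of_subset_of_card_le hsub (by rw [hcx, hcy]))
    exact Finset.not_subset.mp this
  have hoff : ∀ x y z : ↥𝒜, ¬ (x = y ∧ y = z) → T x y z = 0 := by
    intro x y z hne
    by_cases hxy : x = y
    · have hyz : y ≠ z := fun h => hne ⟨hxy, h⟩
      obtain ⟨i, hiy, hiz⟩ := hnotsub y z (fun h => hyz (Subtype.ext h))
      refine hzero_of x y z i ?_
      rw [hxy]
      simp only [hiy, hiz, if_true, if_false]
      norm_num
    · by_cases hyz : y = z
      · obtain ⟨i, hiy, hix⟩ := hnotsub y x (fun h => hxy (Subtype.ext h.symm))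
        refine hzero_of x y z i ?_
        rw [← hyz]
        simp only [hiy, hix, if_true, if_false]
        norm_num
      · by_cases hxz : x = z
        · obtain ⟨i, hix, hiy⟩ := hnotsub x y (fun h => hxy (Subtype.ext h))
          refine hzero_of x y z i ?_
          rw [← hxz]
          simp only [hix, hiy, if_true, if_false]
          norm_num
        · obtain ⟨i, hi⟩ := hfree _ x.2 _ y.2 _ z.2
            (fun h => hxy (Subtype.ext h)) (fun h => hxz (Subtype.ext h))
            (fun h => hyz (Subtype.ext h))
          refine hzero_of x y z i ?_
          rcases hi with ⟨h1, h2, h3⟩ | ⟨h1, h2, h3⟩ | ⟨h1, h2, h3⟩ <;>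
            · simp only [h1, h2, h3, if_true, if_false]
              norm_num
  -- the three classes of colourings
  set S₁ : Finset (Fin n → Fin 4) := univ.filter (fun c => (fib c 0).card ≤ t) with hS₁
  set S₂ : Finset (Fin n → Fin 4) :=
    univ.filter (fun c => ¬ (fib c 0).card ≤ t ∧ (fib c 1).card ≤ t) with hS₂
  set S₃ : Finset (Fin n → Fin 4) :=
    univ.filter (fun c => ¬ (fib c 0).card ≤ t ∧ ¬ (fib c 1).card ≤ t) with hS₃
  have hsplit : ∀ f : (Fin n → Fin 4) → ℚ,
      ∑ c : Fin n → Fin 4, f c = ∑ c ∈ S₁, f c + ∑ c ∈ S₂, f c + ∑ c ∈ S₃, f c := by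
    intro f
    rw [hS₁, hS₂, hS₃]
    rw [← Finset.sum_filter_add_sum_filter_not univ (fun c => (fib c 0).card ≤ t) f]
    rw [← Finset.sum_filter_add_sum_filter_not
      (univ.filter (fun c => ¬ (fib c 0).card ≤ t)) (fun c => (fib c 1).card ≤ t) f]
    rw [Finset.filter_filter, Finset.filter_filter]
    ring
  have hS₃t : ∀ c ∈ S₃, (fib c 2).card ≤ t := by
    intro c hc
    rw [hS₃, Finset.mem_filter] at hc
    have := fib_card_sum c
    omega
  -- the decomposition
  set 𝒟 : Finset (Finset (Fin n)) := univ.powersetCard t with h𝒟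
  set w : (Fin n → Fin 4) → ℚ := fun c => (-2:ℚ)^((fib c 3).card) with hw
  set v₁ : Finset (Fin n) → ↥𝒜 → ↥𝒜 → ℚ := fun D y z =>
    ∑ c ∈ S₁, rr k t (fib c 0) D * ((if fib c 1 ⊆ (y:Finset (Fin n)) then (1:ℚ) else 0)
      * ((if fib c 2 ⊆ (z:Finset (Fin n)) then 1 else 0) * w c)) with hv₁
  set v₂ : Finset (Fin n) → ↥𝒜 → ↥𝒜 → ℚ := fun D x z =>
    ∑ c ∈ S₂, rr k t (fib c 1) D * ((if fib c 0 ⊆ (x:Finset (Fin n)) then (1:ℚ) else 0)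
      * ((if fib c 2 ⊆ (z:Finset (Fin n)) then 1 else 0) * w c)) with hv₂
  set v₃ : Finset (Fin n) → ↥𝒜 → ↥𝒜 → ℚ := fun D x y =>
    ∑ c ∈ S₃, rr k t (fib c 2) D * ((if fib c 0 ⊆ (x:Finset (Fin n)) then (1:ℚ) else 0)
      * ((if fib c 1 ⊆ (y:Finset (Fin n)) then 1 else 0) * w c)) with hv₃
  have hcardk : ∀ x : ↥𝒜, (x:Finset (Fin n)).card = k := fun x => hcard _ x.2
  have hT : ∀ x y z : ↥𝒜, T x y z =
      ∑ D ∈ 𝒟, uu D (x:Finset (Fin n)) * v₁ D y z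
      + ∑ D ∈ 𝒟, uu D (y:Finset (Fin n)) * v₂ D x z
      + ∑ D ∈ 𝒟, uu D (z:Finset (Fin n)) * v₃ D x y := by
    intro x y z
    refine Eq.trans (exp_lemma (x:Finset (Fin n)) (y:Finset (Fin n)) (z:Finset (Fin n))) ?_
    rw [hsplit]
    congr 1
    congr 1
    -- S₁ part
    · have step : ∀ c ∈ S₁,
          (if fib c 0 ⊆ (x:Finset (Fin n)) then (1:ℚ) else 0)
            * (if fib c 1 ⊆ (y:Finset (Fin n)) then 1 else 0)
            * (if fib c 2 ⊆ (z:Finset (Fin n)) then 1 else 0) * w c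
          = ∑ D ∈ 𝒟, uu D (x:Finset (Fin n))
              * (rr k t (fib c 0) D * ((if fib c 1 ⊆ (y:Finset (Fin n)) then (1:ℚ) else 0)
                * ((if fib c 2 ⊆ (z:Finset (Fin n)) then 1 else 0) * w c))) := by
        intro c hc
        rw [hS₁, Finset.mem_filter] at hc
        rw [chi_eq' htk (fib c 0) (x:Finset (Fin n)) (hcardk x) hc.2]
        rw [Finset.sum_mul, Finset.sum_mul, Finset.sum_mul]
        exact Finset.sum_congr rfl (fun D _ => by ring)
      rw [Finset.sum_congr rfl step, Finset.sum_comm]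
      exact Finset.sum_congr rfl (fun D _ => by rw [hv₁, Finset.mul_sum])
    -- S₂ part
    · have step : ∀ c ∈ S₂,
          (if fib c 0 ⊆ (x:Finset (Fin n)) then (1:ℚ) else 0)
            * (if fib c 1 ⊆ (y:Finset (Fin n)) then 1 else 0)
            * (if fib c 2 ⊆ (z:Finset (Fin n)) then 1 else 0) * w c
          = ∑ D ∈ 𝒟, uu D (y:Finset (Fin n))
              * (rr k t (fib c 1) D * ((if fib c 0 ⊆ (x:Finset (Fin n)) then (1:ℚ) else 0)
                * ((if fib c 2 ⊆ (z:Finset (Fin n)) then 1 else 0) * w c))) := by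
        intro c hc
        rw [hS₂, Finset.mem_filter] at hc
        rw [chi_eq' htk (fib c 1) (y:Finset (Fin n)) (hcardk y) hc.2.2]
        rw [Finset.mul_sum, Finset.sum_mul, Finset.sum_mul]
        exact Finset.sum_congr rfl (fun D _ => by ring)
      rw [Finset.sum_congr rfl step, Finset.sum_comm]
      exact Finset.sum_congr rfl (fun D _ => by rw [hv₂, Finset.mul_sum])
    -- S₃ part
    · have step : ∀ c ∈ S₃,
          (if fib c 0 ⊆ (x:Finset (Fin n)) then (1:ℚ) else 0)
            * (if fib c 1 ⊆ (y:Finset (Fin n)) then 1 else 0)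
            * (if fib c 2 ⊆ (z:Finset (Fin n)) then 1 else 0) * w c
          = ∑ D ∈ 𝒟, uu D (z:Finset (Fin n))
              * (rr k t (fib c 2) D * ((if fib c 0 ⊆ (x:Finset (Fin n)) then (1:ℚ) else 0)
                * ((if fib c 1 ⊆ (y:Finset (Fin n)) then 1 else 0) * w c))) := by
        intro c hc
        rw [chi_eq' htk (fib c 2) (z:Finset (Fin n)) (hcardk z) (hS₃t c hc)]
        rw [Finset.mul_sum, Finset.sum_mul]
        exact Finset.sum_congr rfl (fun D _ => by ring)
      rw [Finset.sum_congr rfl step, Finset.sum_comm]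
      exact Finset.sum_congr rfl (fun D _ => by rw [hv₃, Finset.mul_sum])
  have := tao T hdiag hoff 𝒟 𝒟 𝒟
    (fun D x => uu D (x:Finset (Fin n))) (fun D x => uu D (x:Finset (Fin n)))
    (fun D x => uu D (x:Finset (Fin n))) v₁ v₂ v₃ hT
  rw [Fintype.card_coe] at this
  have hDcard : 𝒟.card = Nat.choose n t := by
    rw [h𝒟, Finset.card_powersetCard, Finset.card_univ, Fintype.card_fin]
  omega


end SFP

open Finset in
theorem stmt_1 (n : ℕ) (hn : 0 < n)
    (𝓕 : Finset (Finset (Fin n)))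
    (hsf : SunflowerFree 𝓕) :
    𝓕.card ≤ 3 * ((n + 2) / 3) * Nat.choose n (n / 3) +
      2 * ∑ i ∈ Finset.range ((n + 2) / 3 + 1), Nat.choose n i := by
  classical
  set m := (n + 2) / 3 with hm
  set t := n / 3 with ht
  set a : ℕ → ℕ := fun k => (𝓕.filter (fun F => F.card = k)).card with ha
  have hsum : 𝓕.card = ∑ k ∈ range (n+1), a k := by
    refine Finset.card_eq_sum_card_fiberwise (fun F _ => Finset.mem_range.2 ?_)
    have : F.card ≤ n := by simpa using Finset.card_le_univ F
    omega
  have htrivial : ∀ k, a k ≤ Nat.choose n k := by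
    intro k
    rw [ha]
    have hsub : 𝓕.filter (fun F => F.card = k) ⊆ univ.powersetCard k := by
      intro F hF
      rw [Finset.mem_powersetCard]
      exact ⟨Finset.subset_univ F, (Finset.mem_filter.mp hF).2⟩
    have := Finset.card_le_card hsub
    rwa [Finset.card_powersetCard, Finset.card_univ, Fintype.card_fin] at this
  have hslice : ∀ k, m < k → a k ≤ 3 * Nat.choose n t := by
    intro k hk
    refine SFP.slice_bound (by omega) (by omega) _ (fun F hF => (Finset.mem_filter.mp hF).2) ?_
    intro F₁ hF₁ F₂ hF₂ F₃ hF₃ h12 h13 h23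
    have hns := hsf F₁ (Finset.mem_of_mem_filter _ hF₁) F₂ (Finset.mem_of_mem_filter _ hF₂)
      F₃ (Finset.mem_of_mem_filter _ hF₃)
    by_contra hno
    push_neg at hno
    apply hns
    refine ⟨h12, h13, h23, ?_, ?_, ?_⟩
    · ext i
      simp only [Finset.mem_inter]
      constructor
      · rintro ⟨h1, h2⟩
        refine ⟨⟨h1, h2⟩, ?_⟩
        by_contra h3
        have := hno i
        tauto
      · tauto
    · ext i
      simp only [Finset.mem_inter]
      constructor
      · rintro ⟨h1, h3⟩
        by_cases h2 : i ∈ F₂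
        · tauto
        · have := hno i; tauto
      · tauto
    · ext i
      simp only [Finset.mem_inter]
      constructor
      · rintro ⟨h2, h3⟩
        by_cases h1 : i ∈ F₁
        · tauto
        · have := hno i; tauto
      · tauto
  -- split the range
  set R₁ := (range (n+1)).filter (fun k => k ≤ m) with hR₁
  set R₂ := (range (n+1)).filter (fun k => ¬ k ≤ m ∧ k < n - m) with hR₂
  set R₃ := (range (n+1)).filter (fun k => ¬ k ≤ m ∧ ¬ k < n - m) with hR₃
  have hsplit : ∑ k ∈ range (n+1), a k
      = ∑ k ∈ R₁, a k + ∑ k ∈ R₂, a k + ∑ k ∈ R₃, a k := by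
    rw [hR₁, hR₂, hR₃]
    rw [← Finset.sum_filter_add_sum_filter_not (range (n+1)) (fun k => k ≤ m) a]
    rw [← Finset.sum_filter_add_sum_filter_not
      ((range (n+1)).filter (fun k => ¬ k ≤ m)) (fun k => k < n - m) a]
    rw [Finset.filter_filter, Finset.filter_filter]
    ring
  have hB1 : ∑ k ∈ R₁, a k ≤ ∑ i ∈ range (m+1), Nat.choose n i := by
    refine le_trans (Finset.sum_le_sum (fun k _ => htrivial k)) ?_
    refine Finset.sum_le_sum_of_subset_of_nonneg ?_ (fun _ _ _ => Nat.zero_le _)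
    intro k hk
    rw [hR₁, Finset.mem_filter, Finset.mem_range] at hk
    rw [Finset.mem_range]
    omega
  have hB2 : ∑ k ∈ R₂, a k ≤ m * (3 * Nat.choose n t) := by
    refine le_trans (Finset.sum_le_card_nsmul R₂ a (3 * Nat.choose n t) ?_) ?_
    · intro k hk
      rw [hR₂, Finset.mem_filter] at hk
      exact hslice k (by omega)
    · have hsub : R₂ ⊆ Finset.Ico (m+1) (n-m) := by
        intro k hk
        rw [hR₂, Finset.mem_filter] at hk
        rw [Finset.mem_Ico]
        omega
      have := Finset.card_le_card hsub
      rw [Nat.card_Ico] at this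
      have hcard2 : R₂.card ≤ m := by omega
      calc R₂.card • (3 * Nat.choose n t) = R₂.card * (3 * Nat.choose n t) := by
            rw [smul_eq_mul]
        _ ≤ m * (3 * Nat.choose n t) := Nat.mul_le_mul_right _ hcard2
  have hB3 : ∑ k ∈ R₃, a k ≤ ∑ i ∈ range (m+1), Nat.choose n i := by
    refine le_trans (Finset.sum_le_sum (fun k _ => htrivial k)) ?_
    have hsymm : ∀ k ∈ R₃, Nat.choose n k = Nat.choose n (n - k) := by
      intro k hk
      rw [hR₃, Finset.mem_filter, Finset.mem_range] at hk
      exact (Nat.choose_symm (show k ≤ n by omega)).symm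
    rw [Finset.sum_congr rfl hsymm]
    have hinj : ∀ x ∈ R₃, ∀ y ∈ R₃, n - x = n - y → x = y := by
      intro x hx y hy hxy
      rw [hR₃, Finset.mem_filter, Finset.mem_range] at hx hy
      omega
    have himg : ∑ k ∈ R₃, Nat.choose n (n - k)
        = ∑ j ∈ R₃.image (fun k => n - k), Nat.choose n j :=
      (Finset.sum_image hinj).symm
    rw [himg]
    refine Finset.sum_le_sum_of_subset_of_nonneg ?_ (fun _ _ _ => Nat.zero_le _)
    intro j hj
    rw [Finset.mem_image] at hj
    obtain ⟨k, hk, rfl⟩ := hj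
    rw [hR₃, Finset.mem_filter, Finset.mem_range] at hk
    rw [Finset.mem_range]
    omega
  have h3m : 3 * m ≥ n := by omega
  calc 𝓕.card = ∑ k ∈ range (n+1), a k := hsum
    _ = ∑ k ∈ R₁, a k + ∑ k ∈ R₂, a k + ∑ k ∈ R₃, a k := hsplit
    _ ≤ (∑ i ∈ range (m+1), Nat.choose n i) + m * (3 * Nat.choose n t)
        + (∑ i ∈ range (m+1), Nat.choose n i) := by
      exact Nat.add_le_add (Nat.add_le_add hB1 hB2) hB3
    _ = 3 * m * Nat.choose n t + 2 * ∑ i ∈ range (m+1), Nat.choose n i := by ring
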